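/- For every k ≥ 0 and every z ∈ ℝ^{np}, writing ẑ = V_∞ z, one has ‖V_∞ Ṽ(k)^{-1} ∇f(z)‖ ≤ v ṽ² √n κ₃ σ_R^k ‖∇f(z)‖ + nL ‖z − ẑ‖_C + nL ‖ẑ − x*_vec‖. -/

import Mathlib

open Matrix Filter
open scoped Kronecker

noncomputable section

/-- Euclidean norm on `ι → ℝ`. -/
def eucNorm {ι : Type*} [Fintype ι] (z : ι → ℝ) : ℝ := Real.sqrt (∑ i, z i ^ 2)

/-- Spectral norm (operator 2-norm) of a square real matrix. -/
def specNorm {ι : Type*} [Fintype ι] (A : Matrix ι ι ℝ) : ℝ :=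
  sSup {c : ℝ | ∃ z : ι → ℝ, eucNorm z ≤ 1 ∧ c = eucNorm (A.mulVec z)}

/-- Matrix norm induced by a vector norm `N`: `sup_{z ≠ 0} N (A z) / N z`. -/
def opNorm {ι : Type*} [Fintype ι] (N : (ι → ℝ) → ℝ) (A : Matrix ι ι ℝ) : ℝ :=
  sSup {c : ℝ | ∃ z : ι → ℝ, z ≠ 0 ∧ c = N (A.mulVec z) / N z}

/-- `g` is the gradient of `f : ℝ^p → ℝ`. -/
def IsGradient {p : ℕ} (f : (Fin p → ℝ) → ℝ) (g : (Fin p → ℝ) → Fin p → ℝ) : Prop :=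
  ∀ x, HasFDerivAt f (∑ j, g x j • (ContinuousLinearMap.proj j : (Fin p → ℝ) →L[ℝ] ℝ)) x

/-- `R = R̄ ⊗ I_p`. -/
def RK (n p : ℕ) (Rb : Matrix (Fin n) (Fin n) ℝ) :
    Matrix (Fin n × Fin p) (Fin n × Fin p) ℝ :=
  Rb ⊗ₖ (1 : Matrix (Fin p) (Fin p) ℝ)

/-- `V_∞ = (1_n π^T) ⊗ I_p`. -/
def VinfK (n p : ℕ) (π : Fin n → ℝ) :
    Matrix (Fin n × Fin p) (Fin n × Fin p) ℝ :=
  (Matrix.of (fun _ j => π j) : Matrix (Fin n) (Fin n) ℝ) ⊗ₖ (1 : Matrix (Fin p) (Fin p) ℝ)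

/-- `V(k) = R̄^k ⊗ I_p`. -/
def VK (n p : ℕ) (Rb : Matrix (Fin n) (Fin n) ℝ) (k : ℕ) :
    Matrix (Fin n × Fin p) (Fin n × Fin p) ℝ :=
  (Rb ^ k) ⊗ₖ (1 : Matrix (Fin p) (Fin p) ℝ)

/-- `Ṽ(k)⁻¹ = diag(((R̄^k)_{11})⁻¹, …, ((R̄^k)_{nn})⁻¹) ⊗ I_p`. -/
def VtinvK (n p : ℕ) (Rb : Matrix (Fin n) (Fin n) ℝ) (k : ℕ) :
    Matrix (Fin n × Fin p) (Fin n × Fin p) ℝ :=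
  Matrix.diagonal (fun q => ((Rb ^ k) q.1 q.1)⁻¹)

/-- `∇f(z) = (∇f_1(z_1), …, ∇f_n(z_n))` block-wise. -/
def gradf {n p : ℕ} (g : Fin n → (Fin p → ℝ) → Fin p → ℝ) (z : Fin n × Fin p → ℝ) :
    Fin n × Fin p → ℝ :=
  fun q => g q.1 (fun j => z (q.1, j)) q.2

/-- `x*_vec = 1_n ⊗ x*`. -/
def starVec (n p : ℕ) (xstar : Fin p → ℝ) : Fin n × Fin p → ℝ := fun q => xstar q.2

end


noncomputable section
namespace Hlp
open Matrix
open scoped Kronecker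
section Gen
variable {ι : Type*} [Fintype ι]


lemma eucNorm_nonneg (z : ι → ℝ) : 0 ≤ eucNorm z := Real.sqrt_nonneg _

lemma sq_eucNorm (z : ι → ℝ) : eucNorm z ^ 2 = ∑ i, z i ^ 2 :=
  Real.sq_sqrt (Finset.sum_nonneg fun i _ => sq_nonneg _)

lemma eucNorm_eq_norm (z : ι → ℝ) :
    eucNorm z = ‖(WithLp.equiv 2 (ι → ℝ)).symm z‖ := by
  rw [EuclideanSpace.norm_eq]
  simp [eucNorm, Real.norm_eq_abs, sq_abs]

lemma eucNorm_zero : eucNorm (0 : ι → ℝ) = 0 := by simp [eucNorm]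

lemma eucNorm_eq_zero {z : ι → ℝ} (h : eucNorm z = 0) : z = 0 := by
  rw [eucNorm_eq_norm] at h
  have := norm_eq_zero.mp h
  simpa using congrArg (WithLp.equiv 2 (ι → ℝ)) this

lemma eucNorm_add_le (z w : ι → ℝ) : eucNorm (z + w) ≤ eucNorm z + eucNorm w := by
  simp only [eucNorm_eq_norm]
  rw [show (WithLp.equiv 2 (ι → ℝ)).symm (z+w) = (WithLp.equiv 2 (ι → ℝ)).symm z + (WithLp.equiv 2 (ι → ℝ)).symm w from rfl]
  exact norm_add_le _ _

lemma eucNorm_smul (a : ℝ) (z : ι → ℝ) : eucNorm (a • z) = |a| * eucNorm z := by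
  simp only [eucNorm_eq_norm]
  rw [show (WithLp.equiv 2 (ι → ℝ)).symm (a • z) = a • (WithLp.equiv 2 (ι → ℝ)).symm z from rfl]
  simp [norm_smul]

lemma eucNorm_neg (z : ι → ℝ) : eucNorm (-z) = eucNorm z := by simp [eucNorm]

lemma eucNorm_sub_sym (z w : ι → ℝ) : eucNorm (z - w) = eucNorm (w - z) := by
  rw [← eucNorm_neg (z - w)]; congr 1; abel

lemma eucNorm_sum_le {κ : Type*} (s : Finset κ) (f : κ → ι → ℝ) :
    eucNorm (∑ i ∈ s, f i) ≤ ∑ i ∈ s, eucNorm (f i) := by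
  classical
  induction s using Finset.induction with
  | empty => simp [eucNorm_zero]
  | insert a s h ih =>
    rw [Finset.sum_insert h, Finset.sum_insert h]
    exact le_trans (eucNorm_add_le _ _) (by linarith)

lemma abs_le_eucNorm (z : ι → ℝ) (q : ι) : |z q| ≤ eucNorm z := by
  rw [← Real.sqrt_sq_eq_abs]
  exact Real.sqrt_le_sqrt (Finset.single_le_sum (f := fun i => z i ^ 2)
    (fun i _ => sq_nonneg _) (Finset.mem_univ q))

lemma eucNorm_single [DecidableEq ι] (q : ι) : eucNorm (Pi.single q (1:ℝ)) = 1 := by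
  unfold eucNorm
  rw [Finset.sum_eq_single q] <;> simp [Pi.single_apply]


lemma eucNorm_sub_le (z w : ι → ℝ) : eucNorm (z - w) ≤ eucNorm z + eucNorm w := by
  rw [sub_eq_add_neg]
  refine le_trans (eucNorm_add_le _ _) ?_
  rw [eucNorm_neg]

/-- Frobenius-type bound. -/
lemma eucNorm_mulVec_le_frob (A : Matrix ι ι ℝ) (z : ι → ℝ) :
    eucNorm (A.mulVec z) ≤ Real.sqrt (∑ q, ∑ r, A q r ^ 2) * eucNorm z := by
  have h1 : ∀ q, (A.mulVec z q) ^ 2 ≤ (∑ r, A q r ^ 2) * ∑ r, z r ^ 2 := fun q =>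
    Finset.sum_mul_sq_le_sq_mul_sq Finset.univ (fun r => A q r) z
  have h2 : ∑ q, (A.mulVec z q) ^2 ≤ (∑ q, ∑ r, A q r ^ 2) * ∑ r, z r ^ 2 := by
    rw [Finset.sum_mul]
    exact Finset.sum_le_sum fun q _ => h1 q
  calc eucNorm (A.mulVec z) = Real.sqrt (∑ q, (A.mulVec z q)^2) := rfl
    _ ≤ Real.sqrt ((∑ q, ∑ r, A q r ^ 2) * ∑ r, z r ^ 2) := Real.sqrt_le_sqrt h2
    _ = _ := by
        exact Real.sqrt_mul (Finset.sum_nonneg fun _ _ => Finset.sum_nonneg fun _ _ => sq_nonneg _) _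

lemma eucNorm_diag_mulVec_le {M : ℝ} (hM : 0 ≤ M) (d : ι → ℝ) (hd : ∀ q, |d q| ≤ M)
    [DecidableEq ι] (w : ι → ℝ) :
    eucNorm ((Matrix.diagonal d).mulVec w) ≤ M * eucNorm w := by
  have h : ∑ q, ((Matrix.diagonal d).mulVec w q)^2 ≤ M^2 * ∑ q, w q ^2 := by
    rw [Finset.mul_sum]
    refine Finset.sum_le_sum fun q _ => ?_
    rw [Matrix.mulVec_diagonal, mul_pow]
    have : d q ^ 2 ≤ M ^ 2 := by
      rw [← sq_abs]
      exact pow_le_pow_left₀ (abs_nonneg _) (hd q) 2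
    exact mul_le_mul_of_nonneg_right this (sq_nonneg _)
  calc eucNorm _ = Real.sqrt (∑ q, ((Matrix.diagonal d).mulVec w q)^2) := rfl
    _ ≤ Real.sqrt (M^2 * ∑ q, w q ^2) := Real.sqrt_le_sqrt h
    _ = M * eucNorm w := by rw [Real.sqrt_mul (sq_nonneg M), Real.sqrt_sq hM]; rfl

lemma specSet_bdd (A : Matrix ι ι ℝ) :
    BddAbove {c : ℝ | ∃ z : ι → ℝ, eucNorm z ≤ 1 ∧ c = eucNorm (A.mulVec z)} := by
  refine ⟨Real.sqrt (∑ q, ∑ r, A q r ^ 2), fun c hc => ?_⟩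
  obtain ⟨z, hz, rfl⟩ := hc
  calc eucNorm (A.mulVec z) ≤ Real.sqrt (∑ q, ∑ r, A q r ^ 2) * eucNorm z :=
        eucNorm_mulVec_le_frob A z
    _ ≤ Real.sqrt (∑ q, ∑ r, A q r ^ 2) * 1 :=
        mul_le_mul_of_nonneg_left hz (Real.sqrt_nonneg _)
    _ = _ := mul_one _

lemma zero_mem_specSet (A : Matrix ι ι ℝ) :
    (0:ℝ) ∈ {c : ℝ | ∃ z : ι → ℝ, eucNorm z ≤ 1 ∧ c = eucNorm (A.mulVec z)} :=
  ⟨0, by rw [eucNorm_zero]; exact zero_le_one, by rw [Matrix.mulVec_zero, eucNorm_zero]⟩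

lemma specNorm_nonneg (A : Matrix ι ι ℝ) : 0 ≤ specNorm A :=
  le_csSup (specSet_bdd A) (zero_mem_specSet A)

lemma le_specNorm (A : Matrix ι ι ℝ) {z : ι → ℝ} (hz : eucNorm z ≤ 1) :
    eucNorm (A.mulVec z) ≤ specNorm A :=
  le_csSup (specSet_bdd A) ⟨z, hz, rfl⟩

lemma eucNorm_mulVec_le_specNorm (A : Matrix ι ι ℝ) (z : ι → ℝ) :
    eucNorm (A.mulVec z) ≤ specNorm A * eucNorm z := by
  rcases eq_or_lt_of_le (eucNorm_nonneg z) with h | h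
  · rw [eucNorm_eq_zero h.symm, Matrix.mulVec_zero, eucNorm_zero]; simp
  · set c := eucNorm z with hc
    have h1 : eucNorm (c⁻¹ • z) = 1 := by
      rw [eucNorm_smul, abs_of_pos (inv_pos.mpr h), inv_mul_cancel₀ (ne_of_gt h)]
    have h2 := le_specNorm A (le_of_eq h1)
    rw [Matrix.mulVec_smul, eucNorm_smul, abs_of_pos (inv_pos.mpr h)] at h2
    calc eucNorm (A.mulVec z) = c * (c⁻¹ * eucNorm (A.mulVec z)) := by
          field_simp
      _ ≤ c * specNorm A := mul_le_mul_of_nonneg_left h2 (le_of_lt h)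
      _ = _ := mul_comm _ _

lemma specNorm_le {C : ℝ} (hC : 0 ≤ C) (A : Matrix ι ι ℝ)
    (h : ∀ z, eucNorm (A.mulVec z) ≤ C * eucNorm z) : specNorm A ≤ C := by
  refine csSup_le ⟨0, zero_mem_specSet A⟩ fun c hc => ?_
  obtain ⟨z, hz, rfl⟩ := hc
  calc eucNorm (A.mulVec z) ≤ C * eucNorm z := h z
    _ ≤ C * 1 := mul_le_mul_of_nonneg_left hz hC
    _ = C := mul_one C

lemma abs_diag_le_specNorm [DecidableEq ι] (d : ι → ℝ) (q : ι) :
    |d q| ≤ specNorm (Matrix.diagonal d) := by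
  have h := le_specNorm (Matrix.diagonal d) (z := Pi.single q 1) (le_of_eq (eucNorm_single q))
  rw [Matrix.diagonal_mulVec_single] at h
  calc |d q| = eucNorm (Pi.single q (d q * 1)) := by
        unfold eucNorm
        rw [Finset.sum_eq_single q]
        · simp [Real.sqrt_sq_eq_abs]
        · intro b _ hb; simp [Pi.single_apply, hb]
        · simp
    _ ≤ _ := h


section OpN

variable {N : (ι → ℝ) → ℝ} (hge : ∀ z, eucNorm z ≤ N z)
  {κ : ℝ} (hκ : ∀ z, N z ≤ κ * eucNorm z)

include hge in
lemma N_pos {u : ι → ℝ} (hu : u ≠ 0) : 0 < N u := by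
  rcases eq_or_lt_of_le (le_trans (eucNorm_nonneg u) (hge u)) with h | h
  · exact absurd (eucNorm_eq_zero (le_antisymm (h ▸ hge u) (eucNorm_nonneg u))) hu
  · exact h

include hge hκ in
lemma opSet_bdd (A : Matrix ι ι ℝ) :
    BddAbove {c : ℝ | ∃ z : ι → ℝ, z ≠ 0 ∧ c = N (A.mulVec z) / N z} := by
  refine ⟨κ * Real.sqrt (∑ q, ∑ r, A q r ^ 2), fun c hc => ?_⟩
  obtain ⟨z, hz, rfl⟩ := hc
  rw [div_le_iff₀ (N_pos hge hz)]
  calc N (A.mulVec z) ≤ κ * eucNorm (A.mulVec z) := hκ _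
    _ ≤ κ * (Real.sqrt (∑ q, ∑ r, A q r ^ 2) * eucNorm z) := by
        have hκ0 : 0 ≤ κ := by
          have h1 := N_pos hge hz
          have h2 := hκ z
          nlinarith [eucNorm_nonneg z, N_pos hge hz, hge z]
        exact mul_le_mul_of_nonneg_left (eucNorm_mulVec_le_frob A z) hκ0
    _ ≤ κ * Real.sqrt (∑ q, ∑ r, A q r ^ 2) * N z := by
        rw [mul_assoc]
        refine mul_le_mul_of_nonneg_left (mul_le_mul_of_nonneg_left (le_trans (hge z) (le_refl _)) (Real.sqrt_nonneg _)) ?_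
        nlinarith [eucNorm_nonneg z, N_pos hge hz, hge z, hκ z]

include hge hκ in
lemma N_mulVec_le (A : Matrix ι ι ℝ) (hN0 : N 0 = 0) (u : ι → ℝ) :
    N (A.mulVec u) ≤ opNorm N A * N u := by
  rcases eq_or_ne u 0 with rfl | hu
  · rw [Matrix.mulVec_zero, hN0, mul_zero]
  · have hmem : N (A.mulVec u) / N u ∈ {c : ℝ | ∃ z : ι → ℝ, z ≠ 0 ∧ c = N (A.mulVec z) / N z} :=
      ⟨u, hu, rfl⟩
    have := le_csSup (opSet_bdd hge hκ A) hmem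
    have hpos := N_pos hge hu
    calc N (A.mulVec u) = N (A.mulVec u) / N u * N u := by field_simp
      _ ≤ opNorm N A * N u := mul_le_mul_of_nonneg_right this (le_of_lt hpos)

end OpN
end Gen

variable {n p : ℕ} (Rb : Matrix (Fin n) (Fin n) ℝ)
  (hnonneg : ∀ i j, 0 ≤ Rb i j) (hrow : ∀ i, ∑ j, Rb i j = 1)
  (π : Fin n → ℝ) (hπsum : ∑ i, π i = 1) (hπstat : Matrix.vecMul π Rb = π)

include hnonneg in
lemma pow_nonneg' : ∀ k i j, 0 ≤ (Rb ^ k) i j := by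
  intro k
  induction k with
  | zero => intro i j; by_cases h : i = j <;> simp [Matrix.one_apply, h]
  | succ k ih =>
    intro i j
    rw [pow_succ, Matrix.mul_apply]
    exact Finset.sum_nonneg fun l _ => mul_nonneg (ih i l) (hnonneg l j)

include hnonneg hrow in
lemma pow_row_sum : ∀ k i, ∑ j, (Rb ^ k) i j = 1 := by
  intro k
  induction k with
  | zero => intro i; simp [Matrix.one_apply]
  | succ k ih =>
    intro i
    simp only [pow_succ, Matrix.mul_apply]
    rw [Finset.sum_comm]
    calc ∑ l, ∑ j, (Rb^k) i l * Rb l j = ∑ l, (Rb^k) i l * ∑ j, Rb l j := by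
          simp [Finset.mul_sum]
      _ = 1 := by simp only [hrow, mul_one]; exact ih i
  
include hnonneg hrow in
lemma pow_entry_le_one : ∀ k i j, (Rb ^ k) i j ≤ 1 := by
  intro k i j
  rw [← pow_row_sum Rb hnonneg hrow k i]
  exact Finset.single_le_sum (f := fun j => (Rb^k) i j)
    (fun l _ => pow_nonneg' Rb hnonneg k i l) (Finset.mem_univ j)

include hnonneg in
lemma pow_diag_ge : ∀ k i, Rb i i ^ k ≤ (Rb ^ k) i i := by
  intro k
  induction k with
  | zero => simp [Matrix.one_apply]
  | succ k ih =>
    intro i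
    rw [pow_succ, pow_succ, Matrix.mul_apply]
    calc Rb i i ^ k * Rb i i ≤ (Rb^k) i i * Rb i i :=
          mul_le_mul_of_nonneg_right (ih i) (hnonneg i i)
      _ ≤ ∑ l, (Rb^k) i l * Rb l i :=
          Finset.single_le_sum (f := fun l => (Rb^k) i l * Rb l i)
            (fun l _ => mul_nonneg (pow_nonneg' Rb hnonneg k i l) (hnonneg l i)) (Finset.mem_univ i)

include hπstat in
lemma vecMul_pow : ∀ k, Matrix.vecMul π (Rb ^ k) = π := by
  intro k
  induction k with
  | zero => simp
  | succ k ih => rw [pow_succ, ← Matrix.vecMul_vecMul, ih, hπstat]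

include hrow in
lemma M2 : RK n p Rb * VinfK n p π = VinfK n p π := by
  have hsmall : Rb * (Matrix.of fun _ j => π j) = Matrix.of fun _ j => π j := by
    ext i j
    rw [Matrix.mul_apply]
    simp only [Matrix.of_apply]
    rw [← Finset.sum_mul, hrow, one_mul]
  unfold RK VinfK
  rw [← Matrix.mul_kronecker_mul, hsmall, Matrix.one_mul]

lemma M1 (k : ℕ) : RK n p Rb * VK n p Rb k = VK n p Rb (k+1) := by
  unfold RK VK
  rw [← Matrix.mul_kronecker_mul, Matrix.one_mul, ← pow_succ']

include hπstat in
lemma M3 (k : ℕ) : VinfK n p π * VK n p Rb k = VinfK n p π := by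
  have hsmall : (Matrix.of fun (_ : Fin n) j => π j) * Rb ^ k = Matrix.of fun (_ : Fin n) j => π j := by
    ext i j
    rw [Matrix.mul_apply]
    simp only [Matrix.of_apply]
    have := congrFun (vecMul_pow Rb π hπstat k) j
    rw [Matrix.vecMul, dotProduct] at this
    simpa using this
  unfold VinfK VK
  rw [← Matrix.mul_kronecker_mul, Matrix.one_mul, hsmall]

include hπsum in
lemma M4 : VinfK n p π * VinfK n p π = VinfK n p π := by
  have hsmall : (Matrix.of fun (_ : Fin n) j => π j) * (Matrix.of fun (_ : Fin n) j => π j) = Matrix.of fun (_ : Fin n) j => π j := by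
    ext i j
    rw [Matrix.mul_apply]
    simp only [Matrix.of_apply]
    rw [← Finset.sum_mul, hπsum, one_mul]
  unfold VinfK
  rw [← Matrix.mul_kronecker_mul, Matrix.one_mul, hsmall]

include hrow hπsum hπstat in
lemma pow_sub_eq (k : ℕ) (hk : 1 ≤ k) :
    (RK n p Rb - VinfK n p π) ^ k = VK n p Rb k - VinfK n p π := by
  induction k with
  | zero => omega
  | succ k ih =>
    rcases Nat.eq_or_lt_of_le hk with h | h
    · have : k = 0 := by omega
      subst this
      rw [pow_one]
      unfold RK VK
      rw [pow_one]
    · have hk1 : 1 ≤ k := by omega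
      rw [pow_succ', ih hk1, Matrix.mul_sub, Matrix.sub_mul, Matrix.sub_mul,
        M1, M2 (p:=p) Rb hrow π, M3 (p:=p) Rb π hπstat, M4 (n:=n) (p:=p) π hπsum]
      abel

section NP
variable {n p : ℕ}


lemma vinf_mulVec (π : Fin n → ℝ) (u : Fin n × Fin p → ℝ) (i : Fin n) (t : Fin p) :
    (VinfK n p π).mulVec u (i,t) = ∑ j, π j * u (j,t) := by
  simp only [VinfK, Matrix.mulVec, dotProduct, Fintype.sum_prod_type,
    Matrix.kroneckerMap_apply, Matrix.of_apply, Matrix.one_apply]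
  refine Finset.sum_congr rfl fun j _ => ?_
  rw [Finset.sum_eq_single t]
  · simp
  · intro b _ hb; simp [Ne.symm hb]
  · simp

lemma vk_sub_vinf_mulVec_single (Rb : Matrix (Fin n) (Fin n) ℝ) (π : Fin n → ℝ) (k : ℕ)
    (i j : Fin n) (t : Fin p) :
    ((VK n p Rb k - VinfK n p π).mulVec (Pi.single (j,t) 1)) (i,t)
      = (Rb ^ k) i j - π j := by
  classical
  simp only [Matrix.mulVec, dotProduct, Fintype.sum_prod_type]
  rw [Finset.sum_eq_single j]
  · rw [Finset.sum_eq_single t]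
    · simp [VK, VinfK, Matrix.one_apply, Pi.single_apply]
    · intro s _ hs; simp [Pi.single_apply, Prod.ext_iff, hs]
    · simp
  · intro l _ hl
    refine Finset.sum_eq_zero fun s _ => ?_
    simp [Pi.single_apply, Prod.ext_iff, hl]
  · simp

lemma eucNorm_block (w : Fin n × Fin p → ℝ) (c : Fin p → ℝ) (hw : ∀ q, w q = c q.2) :
    eucNorm w = Real.sqrt n * eucNorm c := by
  unfold eucNorm
  rw [← Real.sqrt_mul (by positivity)]
  congr 1
  rw [Fintype.sum_prod_type]
  simp only [hw]
  rw [Finset.sum_const, Finset.card_univ, Fintype.card_fin, nsmul_eq_mul]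

lemma sum_block_sq (w : Fin n × Fin p → ℝ) :
    eucNorm w ^ 2 = ∑ j, eucNorm (fun t => w (j,t)) ^ 2 := by
  simp only [sq_eucNorm]
  rw [Fintype.sum_prod_type]

lemma sum_le_sqrt_card_mul (a : Fin n → ℝ) :
    ∑ j, a j ≤ Real.sqrt n * Real.sqrt (∑ j, a j ^ 2) := by
  have h1 : (∑ j, a j)^2 ≤ (n:ℝ) * ∑ j, a j ^2 := by
    have := Finset.sum_mul_sq_le_sq_mul_sq Finset.univ (fun _ => (1:ℝ)) a
    simpa using this
  calc ∑ j, a j ≤ |∑ j, a j| := le_abs_self _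
    _ = Real.sqrt ((∑ j, a j)^2) := (Real.sqrt_sq_eq_abs _).symm
    _ ≤ Real.sqrt ((n:ℝ) * ∑ j, a j ^2) := Real.sqrt_le_sqrt h1
    _ = _ := by rw [Real.sqrt_mul (by positivity)]

end NP
end Hlp
end

/-- Lemma 4(a): for every `k` and `z`, with `ẑ = V_∞ z`,
`‖V_∞ Ṽ(k)⁻¹ ∇f(z)‖ ≤ v ṽ² √n κ₃ σ_R^k ‖∇f(z)‖ + nL ‖z − ẑ‖_C + nL ‖ẑ − x*_vec‖`. -/
theorem stmt10 (n p : ℕ) (hn : 1 ≤ n) (hp : 1 ≤ p) (Rb : Matrix (Fin n) (Fin n) ℝ)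
    (hnonneg : ∀ i j, 0 ≤ Rb i j) (hrow : ∀ i, ∑ j, Rb i j = 1)
    (hdiag : ∀ i, 0 < Rb i i)
    (hirr : ∀ i j, ∃ k : ℕ, 0 < (Rb ^ k) i j)
    (π : Fin n → ℝ) (hπpos : ∀ i, 0 < π i) (hπsum : ∑ i, π i = 1)
    (hπstat : Matrix.vecMul π Rb = π)
    (f : Fin n → (Fin p → ℝ) → ℝ) (g : Fin n → (Fin p → ℝ) → Fin p → ℝ)
    (μ L : ℝ) (hμ : 0 < μ) (hμL : μ ≤ L)
    (hgrad : ∀ i, IsGradient (f i) (g i))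
    (hLip : ∀ i x x', eucNorm (g i x - g i x') ≤ L * eucNorm (x - x'))
    (hsc : ∀ i x x',
      f i x + (∑ j, g i x j * (x' j - x j)) + μ / 2 * eucNorm (x' - x) ^ 2 ≤ f i x')
    (xstar : Fin p → ℝ)
    (hmin : ∀ w, ∑ i, f i xstar ≤ ∑ i, f i w)
    (huniq : ∀ w, (∀ w', ∑ i, f i w ≤ ∑ i, f i w') → w = xstar)
    (NR NC : (Fin n × Fin p → ℝ) → ℝ)
    (hNRtri : ∀ z w, NR (z + w) ≤ NR z + NR w)
    (hNRhom : ∀ (a : ℝ) z, NR (a • z) = |a| * NR z)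
    (hNRdef : ∀ z, NR z = 0 ↔ z = 0)
    (hNCtri : ∀ z w, NC (z + w) ≤ NC z + NC w)
    (hNChom : ∀ (a : ℝ) z, NC (a • z) = |a| * NC z)
    (hNCdef : ∀ z, NC z = 0 ↔ z = 0)
    (hNRge : ∀ z, eucNorm z ≤ NR z) (hNCge : ∀ z, eucNorm z ≤ NC z)
    (κ₁ κ₂ κ₃ κ₄ : ℝ) (hκ₁ : 0 < κ₁) (hκ₂ : 0 < κ₂) (hκ₃ : 0 < κ₃) (hκ₄ : 0 < κ₄)
    (hκ₁R : ∀ z, NR z ≤ κ₁ * NC z) (hκ₂C : ∀ z, NC z ≤ κ₂ * NR z)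
    (hκ₃R : ∀ z, NR z ≤ κ₃ * eucNorm z) (hκ₄C : ∀ z, NC z ≤ κ₄ * eucNorm z)
    (v vt : ℝ) (hv : v = ⨆ k : ℕ, specNorm (VK n p Rb k))
    (hvt : vt = ⨆ k : ℕ, specNorm (VtinvK n p Rb k))
    (σR : ℝ) (hσRdef : σR = opNorm NR (RK n p Rb - VinfK n p π))
    (hσR0 : 0 < σR) (hσR1 : σR < 1)
    :
    ∀ (k : ℕ) (z : Fin n × Fin p → ℝ),
      eucNorm ((VinfK n p π).mulVec ((VtinvK n p Rb k).mulVec (gradf g z))) ≤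
        v * vt ^ 2 * Real.sqrt n * κ₃ * σR ^ k * eucNorm (gradf g z)
          + n * L * NC (z - (VinfK n p π).mulVec z)
          + n * L * eucNorm ((VinfK n p π).mulVec z - starVec n p xstar) := by
  classical
  haveI : NeZero n := ⟨by omega⟩
  haveI : NeZero p := ⟨by omega⟩
  have hL0 : 0 ≤ L := le_trans hμ.le hμL
  have hσ0 : 0 ≤ σR := hσR0.le
  have hπle1 : ∀ j, π j ≤ 1 := fun j => by
    rw [← hπsum]
    exact Finset.single_le_sum (fun i _ => (hπpos i).le) (Finset.mem_univ j)
  have hNR0 : NR 0 = 0 := by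
    have h := hNRhom 0 0
    simpa using h
  have hκ₃1 : 1 ≤ κ₃ := by
    have h1 := hNRge (Pi.single ((⟨0, hn⟩ : Fin n), (⟨0, hp⟩ : Fin p)) (1:ℝ))
    have h2 := hκ₃R (Pi.single ((⟨0, hn⟩ : Fin n), (⟨0, hp⟩ : Fin p)) (1:ℝ))
    rw [Hlp.eucNorm_single] at h1 h2
    linarith
  set A := RK n p Rb - VinfK n p π with hA
  have hAstep : ∀ u, NR (A.mulVec u) ≤ σR * NR u := by
    intro u
    have h := Hlp.N_mulVec_le (N := NR) hNRge (κ := κ₃) hκ₃R A hNR0 u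
    rw [← hσRdef] at h
    exact h
  have hAk : ∀ (k : ℕ) (u : Fin n × Fin p → ℝ), NR ((A ^ k).mulVec u) ≤ σR ^ k * NR u := by
    intro k
    induction k with
    | zero => intro u; simp [Matrix.one_mulVec]
    | succ k ih =>
      intro u
      rw [pow_succ', ← Matrix.mulVec_mulVec]
      calc NR (A.mulVec ((A ^ k).mulVec u)) ≤ σR * NR ((A ^ k).mulVec u) := hAstep _
        _ ≤ σR * (σR ^ k * NR u) := mul_le_mul_of_nonneg_left (ih u) hσ0
        _ = σR ^ (k + 1) * NR u := by ring
  have hdiagpow : ∀ (k : ℕ) (i : Fin n), 0 < (Rb ^ k) i i := fun k i =>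
    lt_of_lt_of_le (pow_pos (hdiag i) k) (Hlp.pow_diag_ge Rb hnonneg k i)
  have fact1 : ∀ (k : ℕ) (i j : Fin n), |(Rb ^ k) i j - π j| ≤ κ₃ * σR ^ k := by
    intro k i j
    rcases Nat.eq_zero_or_pos k with rfl | hk
    · rw [pow_zero, pow_zero, mul_one, Matrix.one_apply]
      by_cases hij : i = j
      · rw [if_pos hij, abs_of_nonneg (by linarith [hπle1 j])]
        linarith [hπpos j]
      · rw [if_neg hij, abs_of_nonpos (by linarith [(hπpos j).le])]
        linarith [hπle1 j]
    · have hkid := Hlp.pow_sub_eq (p := p) Rb hrow π hπsum hπstat k hk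
      rw [← hA] at hkid
      have h1 : ((VK n p Rb k - VinfK n p π).mulVec (Pi.single (j, (⟨0, hp⟩ : Fin p)) 1)) (i, ⟨0, hp⟩)
          = (Rb ^ k) i j - π j := Hlp.vk_sub_vinf_mulVec_single Rb π k i j _
      calc |(Rb ^ k) i j - π j|
          = |((A ^ k).mulVec (Pi.single (j, (⟨0, hp⟩ : Fin p)) 1)) (i, ⟨0, hp⟩)| := by
            rw [hkid, h1]
        _ ≤ eucNorm ((A ^ k).mulVec (Pi.single (j, (⟨0, hp⟩ : Fin p)) 1)) :=
            Hlp.abs_le_eucNorm _ _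
        _ ≤ NR ((A ^ k).mulVec (Pi.single (j, (⟨0, hp⟩ : Fin p)) 1)) := hNRge _
        _ ≤ σR ^ k * NR (Pi.single (j, (⟨0, hp⟩ : Fin p)) 1) := hAk k _
        _ ≤ σR ^ k * (κ₃ * eucNorm (Pi.single (j, (⟨0, hp⟩ : Fin p)) 1)) :=
            mul_le_mul_of_nonneg_left (hκ₃R _) (pow_nonneg hσ0 k)
        _ = κ₃ * σR ^ k := by rw [Hlp.eucNorm_single]; ring
  -- v facts
  have hVKfrob : ∀ k, specNorm (VK n p Rb k) ≤ (n * p : ℝ) := by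
    intro k
    refine Hlp.specNorm_le (by positivity) _ (fun w => ?_)
    refine le_trans (Hlp.eucNorm_mulVec_le_frob _ w)
      (mul_le_mul_of_nonneg_right ?_ (Hlp.eucNorm_nonneg w))
    have hb : ∀ q r : Fin n × Fin p, (VK n p Rb k) q r ^ 2 ≤ 1 := by
      rintro ⟨i, t⟩ ⟨j, s⟩
      simp only [VK, Matrix.kroneckerMap_apply, Matrix.one_apply, mul_ite, mul_one, mul_zero]
      by_cases hts : t = s
      · rw [if_pos hts]
        nlinarith [Hlp.pow_nonneg' Rb hnonneg k i j, Hlp.pow_entry_le_one Rb hnonneg hrow k i j]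
      · rw [if_neg hts]; norm_num
    have hcards : ∑ (_q : Fin n × Fin p), ∑ (_r : Fin n × Fin p), (1:ℝ) = (n * p : ℝ) * (n * p : ℝ) := by
      simp only [Finset.sum_const, Finset.card_univ, Fintype.card_prod, Fintype.card_fin,
        nsmul_eq_mul, mul_one]
      push_cast
      ring
    calc Real.sqrt (∑ q, ∑ r, (VK n p Rb k) q r ^ 2)
        ≤ Real.sqrt (∑ (_q : Fin n × Fin p), ∑ (_r : Fin n × Fin p), (1:ℝ)) :=
          Real.sqrt_le_sqrt (Finset.sum_le_sum fun q _ => Finset.sum_le_sum fun r _ => hb q r)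
      _ = (n * p : ℝ) := by rw [hcards, Real.sqrt_mul_self (by positivity)]
  have hbddv : BddAbove (Set.range fun k => specNorm (VK n p Rb k)) :=
    ⟨(n * p : ℝ), by rintro c ⟨k, rfl⟩; exact hVKfrob k⟩
  have hvk : ∀ k, specNorm (VK n p Rb k) ≤ v := fun k => hv ▸ le_ciSup hbddv k
  have hv0 : 0 ≤ v := le_trans (Hlp.specNorm_nonneg _) (hvk 0)
  have hpowA_euc : ∀ (k : ℕ) (w : Fin n × Fin p → ℝ),
      eucNorm ((A ^ k).mulVec w) ≤ κ₃ * σR ^ k * eucNorm w := fun k w =>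
    calc eucNorm ((A ^ k).mulVec w) ≤ NR ((A ^ k).mulVec w) := hNRge _
      _ ≤ σR ^ k * NR w := hAk k w
      _ ≤ σR ^ k * (κ₃ * eucNorm w) := mul_le_mul_of_nonneg_left (hκ₃R w) (pow_nonneg hσ0 k)
      _ = κ₃ * σR ^ k * eucNorm w := by ring
  have hVinf_op : ∀ w, eucNorm ((VinfK n p π).mulVec w) ≤ v * eucNorm w := by
    intro w
    have hten : Filter.Tendsto (fun k : ℕ => v * eucNorm w + κ₃ * σR ^ k * eucNorm w)
        atTop (nhds (v * eucNorm w)) := by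
      have h0 : Filter.Tendsto (fun k : ℕ => σR ^ k) atTop (nhds 0) :=
        tendsto_pow_atTop_nhds_zero_of_lt_one hσ0 hσR1
      have h1 := ((h0.const_mul κ₃).mul_const (eucNorm w)).const_add (v * eucNorm w)
      simpa [mul_assoc] using h1
    refine ge_of_tendsto hten ?_
    refine Filter.eventually_atTop.mpr ⟨1, fun k hk => ?_⟩
    have hkid := Hlp.pow_sub_eq (p := p) Rb hrow π hπsum hπstat k hk
    rw [← hA] at hkid
    have h5 : (VinfK n p π).mulVec w = (VK n p Rb k).mulVec w - (A ^ k).mulVec w := by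
      rw [hkid, Matrix.sub_mulVec]
      abel
    calc eucNorm ((VinfK n p π).mulVec w)
        ≤ eucNorm ((VK n p Rb k).mulVec w) + eucNorm ((A ^ k).mulVec w) := by
          rw [h5]; exact Hlp.eucNorm_sub_le _ _
      _ ≤ v * eucNorm w + κ₃ * σR ^ k * eucNorm w := add_le_add
          (le_trans (Hlp.eucNorm_mulVec_le_specNorm _ w)
            (mul_le_mul_of_nonneg_right (hvk k) (Hlp.eucNorm_nonneg w)))
          (hpowA_euc k w)
  -- vt facts
  haveI : Nonempty (Fin n) := ⟨⟨0, hn⟩⟩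
  set πmin := Finset.univ.inf' Finset.univ_nonempty π with hπmin
  have hπmin_pos : 0 < πmin := by
    rw [hπmin, Finset.lt_inf'_iff]
    exact fun i _ => hπpos i
  have hπmin_le : ∀ i, πmin ≤ π i := fun i => Finset.inf'_le _ (Finset.mem_univ i)
  obtain ⟨K, hK⟩ : ∃ K : ℕ, ∀ k ≥ K, σR ^ k < πmin / (2 * κ₃) := by
    have h0 : Filter.Tendsto (fun k : ℕ => σR ^ k) atTop (nhds 0) :=
      tendsto_pow_atTop_nhds_zero_of_lt_one hσ0 hσR1
    exact Filter.eventually_atTop.mp (h0.eventually_lt_const (by positivity))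
  set cmin := Finset.univ.inf' Finset.univ_nonempty (fun i => Rb i i) with hcmin
  have hcmin_pos : 0 < cmin := by
    rw [hcmin, Finset.lt_inf'_iff]
    exact fun i _ => hdiag i
  have hcmin_le1 : cmin ≤ 1 := by
    have h1 : Rb ⟨0, hn⟩ ⟨0, hn⟩ ≤ 1 := by
      rw [← hrow ⟨0, hn⟩]
      exact Finset.single_le_sum (fun l _ => hnonneg _ l) (Finset.mem_univ _)
    exact le_trans (Finset.inf'_le _ (Finset.mem_univ ⟨0, hn⟩)) h1
  set δ := min (πmin / 2) (cmin ^ K) with hδ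
  have hδpos : 0 < δ := lt_min (by positivity) (pow_pos hcmin_pos K)
  have hδle : ∀ (k : ℕ) (i : Fin n), δ ≤ (Rb ^ k) i i := by
    intro k i
    rcases le_or_gt K k with h | h
    · have h1 := hK k h
      have h3 : κ₃ * σR ^ k ≤ πmin / 2 := by
        have h2 := mul_lt_mul_of_pos_left h1 hκ₃
        have he : κ₃ * (πmin / (2 * κ₃)) = πmin / 2 := by
          field_simp
        rw [he] at h2
        exact h2.le
      have h4 := (abs_le.mp (fact1 k i i)).1
      calc δ ≤ πmin / 2 := min_le_left _ _
        _ ≤ π i - κ₃ * σR ^ k := by linarith [hπmin_le i]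
        _ ≤ (Rb ^ k) i i := by linarith
    · calc δ ≤ cmin ^ K := min_le_right _ _
        _ ≤ cmin ^ k := pow_le_pow_of_le_one hcmin_pos.le hcmin_le1 h.le
        _ ≤ (Rb i i) ^ k := pow_le_pow_left₀ hcmin_pos.le (Finset.inf'_le _ (Finset.mem_univ i)) k
        _ ≤ (Rb ^ k) i i := Hlp.pow_diag_ge Rb hnonneg k i
  have hVt_spec : ∀ k, specNorm (VtinvK n p Rb k) ≤ δ⁻¹ := by
    intro k
    refine Hlp.specNorm_le (by positivity) _ (fun w => ?_)
    show eucNorm ((Matrix.diagonal fun q : Fin n × Fin p => ((Rb ^ k) q.1 q.1)⁻¹).mulVec w) ≤ _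
    refine Hlp.eucNorm_diag_mulVec_le (by positivity) _ (fun q => ?_) w
    rw [abs_of_pos (inv_pos.mpr (hdiagpow k q.1))]
    exact inv_anti₀ hδpos (hδle k q.1)
  have hbddvt : BddAbove (Set.range fun k => specNorm (VtinvK n p Rb k)) :=
    ⟨δ⁻¹, by rintro c ⟨k, rfl⟩; exact hVt_spec k⟩
  have hvtk : ∀ k, specNorm (VtinvK n p Rb k) ≤ vt := fun k => hvt ▸ le_ciSup hbddvt k
  have hvt0 : 0 ≤ vt := le_trans (Hlp.specNorm_nonneg _) (hvtk 0)
  have hvt_diag : ∀ (k : ℕ) (i : Fin n), ((Rb ^ k) i i)⁻¹ ≤ vt := by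
    intro k i
    have h := Hlp.abs_diag_le_specNorm (fun q : Fin n × Fin p => ((Rb ^ k) q.1 q.1)⁻¹)
      (i, (⟨0, hp⟩ : Fin p))
    rw [abs_of_pos (inv_pos.mpr (hdiagpow k i))] at h
    exact le_trans h (hvtk k)
  have hvt_pi : ∀ i : Fin n, (π i)⁻¹ ≤ vt := by
    intro i
    have h1 : Filter.Tendsto (fun k : ℕ => (Rb ^ k) i i - π i) atTop (nhds 0) := by
      refine squeeze_zero_norm (a := fun k => κ₃ * σR ^ k) (fun k => ?_) ?_
      · exact fact1 k i i
      · have h0 : Filter.Tendsto (fun k : ℕ => σR ^ k) atTop (nhds 0) :=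
          tendsto_pow_atTop_nhds_zero_of_lt_one hσ0 hσR1
        simpa using h0.const_mul κ₃
    have hconv : Filter.Tendsto (fun k : ℕ => (Rb ^ k) i i) atTop (nhds (π i)) := by
      have := h1.add_const (π i)
      simpa using this
    exact le_of_tendsto (hconv.inv₀ (ne_of_gt (hπpos i)))
      (Filter.Eventually.of_forall fun k => hvt_diag k i)
  -- gradient sum zero
  have hgsum : ∀ t : Fin p, ∑ i, g i xstar t = 0 := by
    have hF : HasFDerivAt (fun w => ∑ i, f i w)
        (∑ i, ∑ j, g i xstar j • (ContinuousLinearMap.proj j : (Fin p → ℝ) →L[ℝ] ℝ)) xstar :=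
      HasFDerivAt.fun_sum fun i _ => hgrad i xstar
    have hlm : IsLocalMin (fun w => ∑ i, f i w) xstar := Filter.Eventually.of_forall hmin
    have h0 := hlm.hasFDerivAt_eq_zero hF
    intro t
    have h2 := congrArg (fun (Lm : (Fin p → ℝ) →L[ℝ] ℝ) => Lm (Pi.single t 1)) h0
    simpa [ContinuousLinearMap.sum_apply, ContinuousLinearMap.smul_apply,
      ContinuousLinearMap.proj_apply, Pi.single_apply, Finset.sum_ite_eq,
      Finset.sum_ite_eq'] using h2
  -- main part
  intro k z
  set G := gradf g z with hG
  set Dinf := Matrix.diagonal (fun q : Fin n × Fin p => (π q.1)⁻¹) with hDinf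
  set e : Fin n × Fin p → ℝ :=
    fun q => ((Rb ^ k) q.1 q.1)⁻¹ * (π q.1 - (Rb ^ k) q.1 q.1) * (π q.1)⁻¹ with he
  set E := Matrix.diagonal e with hE
  have hsplit : VtinvK n p Rb k = Dinf + E := by
    rw [hDinf, hE, Matrix.diagonal_add]
    show Matrix.diagonal _ = _
    refine congrArg Matrix.diagonal (funext fun q => ?_)
    have h1 : (Rb ^ k) q.1 q.1 ≠ 0 := ne_of_gt (hdiagpow k q.1)
    have h2 : π q.1 ≠ 0 := ne_of_gt (hπpos q.1)
    show ((Rb ^ k) q.1 q.1)⁻¹ = (π q.1)⁻¹ + e q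
    simp only [he]
    field_simp
    ring
  have hLHS : (VinfK n p π).mulVec ((VtinvK n p Rb k).mulVec G)
      = (VinfK n p π).mulVec (Dinf.mulVec G) + (VinfK n p π).mulVec (E.mulVec G) := by
    rw [hsplit, Matrix.add_mulVec, Matrix.mulVec_add]
  -- Term 1
  have hEbound : eucNorm (E.mulVec G) ≤ vt * (κ₃ * σR ^ k) * vt * eucNorm G := by
    rw [hE]
    refine Hlp.eucNorm_diag_mulVec_le ?_ e (fun q => ?_) G
    · have := pow_nonneg hσ0 k
      positivity
    · rw [he]
      have b1 : |((Rb ^ k) q.1 q.1)⁻¹| ≤ vt := by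
        rw [abs_of_pos (inv_pos.mpr (hdiagpow k q.1))]; exact hvt_diag k q.1
      have b2 : |π q.1 - (Rb ^ k) q.1 q.1| ≤ κ₃ * σR ^ k := by
        rw [abs_sub_comm]; exact fact1 k q.1 q.1
      have b3 : |(π q.1)⁻¹| ≤ vt := by
        rw [abs_of_pos (inv_pos.mpr (hπpos q.1))]; exact hvt_pi q.1
      calc |((Rb ^ k) q.1 q.1)⁻¹ * (π q.1 - (Rb ^ k) q.1 q.1) * (π q.1)⁻¹|
          = |((Rb ^ k) q.1 q.1)⁻¹| * |π q.1 - (Rb ^ k) q.1 q.1| * |(π q.1)⁻¹| := by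
            rw [abs_mul, abs_mul]
        _ ≤ vt * (κ₃ * σR ^ k) * vt :=
            mul_le_mul (mul_le_mul b1 b2 (abs_nonneg _) hvt0) b3 (abs_nonneg _)
              (mul_nonneg hvt0 (by positivity))
  have hsn : 1 ≤ Real.sqrt n := by
    have h1 : (1:ℝ) ≤ (n:ℝ) := by exact_mod_cast hn
    calc (1:ℝ) = Real.sqrt 1 := by simp
      _ ≤ Real.sqrt n := Real.sqrt_le_sqrt h1
  have hterm1 : eucNorm ((VinfK n p π).mulVec (E.mulVec G))
      ≤ v * vt ^ 2 * Real.sqrt n * κ₃ * σR ^ k * eucNorm G := by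
    have h1 := hVinf_op (E.mulVec G)
    have h2 : v * eucNorm (E.mulVec G) ≤ v * (vt * (κ₃ * σR ^ k) * vt * eucNorm G) :=
      mul_le_mul_of_nonneg_left hEbound hv0
    have hnn : 0 ≤ v * vt ^ 2 * κ₃ * σR ^ k * eucNorm G :=
      mul_nonneg (mul_nonneg (mul_nonneg (mul_nonneg hv0 (sq_nonneg vt)) hκ₃.le)
        (pow_nonneg hσ0 k)) (Hlp.eucNorm_nonneg G)
    calc eucNorm ((VinfK n p π).mulVec (E.mulVec G))
        ≤ v * (vt * (κ₃ * σR ^ k) * vt * eucNorm G) := le_trans h1 h2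
      _ = v * vt ^ 2 * κ₃ * σR ^ k * eucNorm G := by ring
      _ ≤ Real.sqrt n * (v * vt ^ 2 * κ₃ * σR ^ k * eucNorm G) :=
          le_mul_of_one_le_left hnn hsn
      _ = v * vt ^ 2 * Real.sqrt n * κ₃ * σR ^ k * eucNorm G := by ring
  -- Term 2
  set xh : Fin p → ℝ := fun t => ∑ j, π j * z (j, t) with hxh
  have hzhat : ∀ q : Fin n × Fin p, ((VinfK n p π).mulVec z) q = xh q.2 := by
    rintro ⟨i, t⟩
    exact Hlp.vinf_mulVec π z i t
  set sfun : Fin p → ℝ := fun t => ∑ j, g j (fun u => z (j, u)) t with hsfun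
  have hT : ∀ q : Fin n × Fin p, ((VinfK n p π).mulVec (Dinf.mulVec G)) q = sfun q.2 := by
    rintro ⟨i, t⟩
    rw [Hlp.vinf_mulVec]
    refine Finset.sum_congr rfl fun j _ => ?_
    rw [hDinf, Matrix.mulVec_diagonal]
    have h2 : π j ≠ 0 := ne_of_gt (hπpos j)
    show π j * ((π j)⁻¹ * G (j, t)) = g j (fun u => z (j, u)) t
    rw [← mul_assoc, mul_inv_cancel₀ h2, one_mul]
    rfl
  have hT2 : eucNorm ((VinfK n p π).mulVec (Dinf.mulVec G)) = Real.sqrt n * eucNorm sfun :=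
    Hlp.eucNorm_block _ sfun hT
  set u1 : Fin p → ℝ := ∑ j : Fin n, (g j (fun u => z (j, u)) - g j xh) with hu1
  set u2 : Fin p → ℝ := ∑ j : Fin n, (g j xh - g j xstar) with hu2
  have hs_eq : sfun = u1 + u2 := by
    funext t
    simp only [hu1, hu2, Pi.add_apply, Finset.sum_apply, Pi.sub_apply]
    rw [Finset.sum_sub_distrib, Finset.sum_sub_distrib]
    have h3 := hgsum t
    rw [hsfun]
    linarith
  have hnorm_s : eucNorm sfun ≤ eucNorm u1 + eucNorm u2 := by
    rw [hs_eq]; exact Hlp.eucNorm_add_le u1 u2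
  have hu1b : eucNorm u1 ≤ L * (Real.sqrt n * eucNorm (z - (VinfK n p π).mulVec z)) := by
    have hCS : ∑ j : Fin n, eucNorm ((fun u => z (j, u)) - xh)
        ≤ Real.sqrt n * eucNorm (z - (VinfK n p π).mulVec z) := by
      have h1 := Hlp.sum_le_sqrt_card_mul (fun j : Fin n => eucNorm ((fun u => z (j, u)) - xh))
      have h2 : ∑ j : Fin n, eucNorm ((fun u => z (j, u)) - xh) ^ 2
          = eucNorm (z - (VinfK n p π).mulVec z) ^ 2 := by
        rw [Hlp.sum_block_sq (z - (VinfK n p π).mulVec z)]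
        refine Finset.sum_congr rfl fun j _ => ?_
        have hfe : ((fun u => z (j, u)) - xh) = (fun t => (z - (VinfK n p π).mulVec z) (j, t)) := by
          funext t
          simp [hzhat (j, t)]
        rw [hfe]
      rw [h2, Real.sqrt_sq (Hlp.eucNorm_nonneg _)] at h1
      exact h1
    calc eucNorm u1 ≤ ∑ j : Fin n, eucNorm (g j (fun u => z (j, u)) - g j xh) := by
          rw [hu1]; exact Hlp.eucNorm_sum_le _ _
      _ ≤ ∑ j : Fin n, L * eucNorm ((fun u => z (j, u)) - xh) :=
          Finset.sum_le_sum fun j _ => hLip j _ xh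
      _ = L * ∑ j : Fin n, eucNorm ((fun u => z (j, u)) - xh) := by rw [Finset.mul_sum]
      _ ≤ L * (Real.sqrt n * eucNorm (z - (VinfK n p π).mulVec z)) :=
          mul_le_mul_of_nonneg_left hCS hL0
  have hu2b : eucNorm u2 ≤ (n : ℝ) * (L * eucNorm (xh - xstar)) := by
    calc eucNorm u2 ≤ ∑ j : Fin n, eucNorm (g j xh - g j xstar) := by
          rw [hu2]; exact Hlp.eucNorm_sum_le _ _
      _ ≤ ∑ _j : Fin n, L * eucNorm (xh - xstar) :=
          Finset.sum_le_sum fun j _ => hLip j xh xstar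
      _ = (n : ℝ) * (L * eucNorm (xh - xstar)) := by
          rw [Finset.sum_const, Finset.card_univ, Fintype.card_fin, nsmul_eq_mul]
  have hzx : eucNorm ((VinfK n p π).mulVec z - starVec n p xstar)
      = Real.sqrt n * eucNorm (xh - xstar) := by
    refine Hlp.eucNorm_block _ (xh - xstar) fun q => ?_
    simp [hzhat q, starVec]
  have hsqn : Real.sqrt n * Real.sqrt n = (n : ℝ) := Real.mul_self_sqrt (by positivity)
  have hterm2 : eucNorm ((VinfK n p π).mulVec (Dinf.mulVec G))
      ≤ (n : ℝ) * L * NC (z - (VinfK n p π).mulVec z)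
        + (n : ℝ) * L * eucNorm ((VinfK n p π).mulVec z - starVec n p xstar) := by
    have h1 : eucNorm ((VinfK n p π).mulVec (Dinf.mulVec G))
        ≤ Real.sqrt n * (L * (Real.sqrt n * eucNorm (z - (VinfK n p π).mulVec z))
            + (n : ℝ) * (L * eucNorm (xh - xstar))) := by
      rw [hT2]
      refine mul_le_mul_of_nonneg_left ?_ (Real.sqrt_nonneg _)
      linarith
    have h2 : Real.sqrt n * (L * (Real.sqrt n * eucNorm (z - (VinfK n p π).mulVec z))
            + (n : ℝ) * (L * eucNorm (xh - xstar)))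
        = (Real.sqrt n * Real.sqrt n) * L * eucNorm (z - (VinfK n p π).mulVec z)
          + (n : ℝ) * L * (Real.sqrt n * eucNorm (xh - xstar)) := by ring
    rw [h2, hsqn, ← hzx] at h1
    have h3 : (n : ℝ) * L * eucNorm (z - (VinfK n p π).mulVec z)
        ≤ (n : ℝ) * L * NC (z - (VinfK n p π).mulVec z) :=
      mul_le_mul_of_nonneg_left (hNCge _) (by positivity)
    linarith
  -- assemble
  calc eucNorm ((VinfK n p π).mulVec ((VtinvK n p Rb k).mulVec G))
      ≤ eucNorm ((VinfK n p π).mulVec (Dinf.mulVec G))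
        + eucNorm ((VinfK n p π).mulVec (E.mulVec G)) := by
        rw [hLHS]; exact Hlp.eucNorm_add_le _ _
    _ ≤ v * vt ^ 2 * Real.sqrt n * κ₃ * σR ^ k * eucNorm G
        + (n : ℝ) * L * NC (z - (VinfK n p π).mulVec z)
        + (n : ℝ) * L * eucNorm ((VinfK n p π).mulVec z - starVec n p xstar) := by
        linarith
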